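/- Let D = (d_{ij}) be an n×n matrix with nonnegative entries and let L : M_n(ℂ) → M_n(ℂ) be the D-type map L(A) = diag(∑_k a_{kk} d_{k1}, …, ∑_k a_{kk} d_{kn}) − A. Then L is positive if and only if d_{ii} > 0 for all i and, for every vector u = (u_1, …, u_n) ∈ ℂ^n with all entries nonzero, ∑_{j=1}^n |u_j|² / (∑_{i=1}^n d_{ij} |u_i|²) ≤ 1. -/

import Mathlib

open Matrix ComplexOrder Filter

lemma psd_vecMulVec {n : ℕ} (v : Fin n → ℂ) : (Matrix.vecMulVec v (star v)).PosSemidef := by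
  refine Matrix.PosSemidef.of_dotProduct_mulVec_nonneg ?_ ?_
  · ext i j
    simp [Matrix.vecMulVec, Matrix.conjTranspose_apply, mul_comm]
  · intro x
    have : star x ⬝ᵥ (Matrix.vecMulVec v (star v)).mulVec x
        = (star x ⬝ᵥ v) * star (star x ⬝ᵥ v) := by
      simp only [Matrix.mulVec, Matrix.vecMulVec_apply, dotProduct, Pi.star_apply,
        star_sum, star_mul', star_star, Finset.mul_sum, Finset.sum_mul]
      rw [Finset.sum_comm]
      congr 1; ext i; congr 1; ext j; ring
    rw [this]
    have h2 : (star x ⬝ᵥ v) * star (star x ⬝ᵥ v) = (Complex.normSq (star x ⬝ᵥ v) : ℂ) := by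
      rw [← Complex.mul_conj]; rfl
    rw [h2]
    exact_mod_cast Complex.normSq_nonneg _

lemma key {n : ℕ} (d : Fin n → Fin n → ℝ)
    (hpos : ∀ A : Matrix (Fin n) (Fin n) ℂ, A.PosSemidef →
      (Matrix.diagonal (fun j => ∑ i, (d i j : ℂ) * A i i) - A).PosSemidef)
    (v w : Fin n → ℂ) :
    Complex.normSq (star w ⬝ᵥ v)
      ≤ ∑ j, (∑ i, d i j * Complex.normSq (v i)) * Complex.normSq (w j) := by
  set A := Matrix.vecMulVec v (star v) with hA
  have h := (hpos A (psd_vecMulVec v)).dotProduct_mulVec_nonneg w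
  have hdiag : A = fun i j => v i * star (v j) := rfl
  have hAii : ∀ i, A i i = (Complex.normSq (v i) : ℂ) := by
    intro i
    show v i * star (v i) = _
    rw [← Complex.mul_conj]; rfl
  have e1 : star w ⬝ᵥ (Matrix.diagonal (fun j => ∑ i, (d i j : ℂ) * A i i) - A) *ᵥ w
      = ((∑ j, (∑ i, d i j * Complex.normSq (v i)) * Complex.normSq (w j)
          - Complex.normSq (star w ⬝ᵥ v) : ℝ) : ℂ) := by
    rw [Matrix.sub_mulVec, dotProduct_sub]
    have e2 : star w ⬝ᵥ (Matrix.diagonal (fun j => ∑ i, (d i j : ℂ) * A i i)) *ᵥ w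
        = ∑ j, (∑ i, (d i j : ℂ) * (Complex.normSq (v i):ℂ)) * (Complex.normSq (w j):ℂ) := by
      simp only [Matrix.mulVec_diagonal, dotProduct, Pi.star_apply, hAii]
      congr 1; ext j
      rw [show star (w j) * ((∑ i, (d i j : ℂ) * (Complex.normSq (v i):ℂ)) * w j)
        = (∑ i, (d i j : ℂ) * (Complex.normSq (v i):ℂ)) * (w j * star (w j)) by ring,
        ← Complex.mul_conj]
      rfl
    have e3 : star w ⬝ᵥ A *ᵥ w = (Complex.normSq (star w ⬝ᵥ v) : ℂ) := by
      have : star w ⬝ᵥ A *ᵥ w = (star w ⬝ᵥ v) * star (star w ⬝ᵥ v) := by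
        simp only [hA, Matrix.mulVec, Matrix.vecMulVec_apply, dotProduct, Pi.star_apply,
          star_sum, star_mul', star_star, Finset.mul_sum, Finset.sum_mul]
        rw [Finset.sum_comm]
        congr 1; ext i; congr 1; ext j; ring
      rw [this, ← Complex.mul_conj]; rfl
    rw [e2, e3]
    push_cast
    ring
  rw [e1] at h
  have := (Complex.le_def.mp h).1
  simpa using this

lemma key_dii {n : ℕ} (d : Fin n → Fin n → ℝ)
    (hpos : ∀ A : Matrix (Fin n) (Fin n) ℂ, A.PosSemidef →
      (Matrix.diagonal (fun j => ∑ i, (d i j : ℂ) * A i i) - A).PosSemidef)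
    (i : Fin n) : 1 ≤ d i i := by
  have h := key d hpos (Pi.single i 1) (Pi.single i 1)
  have h1 : star (Pi.single i 1 : Fin n → ℂ) ⬝ᵥ (Pi.single i 1) = 1 := by
    simp [dotProduct, Pi.single_apply, Finset.sum_ite_eq, apply_ite]
  rw [h1] at h
  simp only [Pi.single_apply, apply_ite Complex.normSq, Complex.normSq_one,
    Complex.normSq_zero, mul_ite, mul_one, mul_zero, Finset.sum_ite_eq,
    Finset.mem_univ, if_true] at h
  simpa using h

lemma key_sum {n : ℕ} (d : Fin n → Fin n → ℝ) (hd : ∀ i j, 0 ≤ d i j)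
    (hpos : ∀ A : Matrix (Fin n) (Fin n) ℂ, A.PosSemidef →
      (Matrix.diagonal (fun j => ∑ i, (d i j : ℂ) * A i i) - A).PosSemidef)
    (u : Fin n → ℂ) (hu : ∀ i, u i ≠ 0) :
    ∑ j, Complex.normSq (u j) / (∑ i, d i j * Complex.normSq (u i)) ≤ 1 := by
  set a : Fin n → ℝ := fun j => Complex.normSq (u j) with ha
  set s : Fin n → ℝ := fun j => ∑ i, d i j * a i with hs
  have hapos : ∀ j, 0 < a j := fun j => Complex.normSq_pos.mpr (hu j)
  have hspos : ∀ j, 0 < s j := by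
    intro j
    have : 0 < d j j * a j :=
      mul_pos (lt_of_lt_of_le one_pos (key_dii d hpos j)) (hapos j)
    exact lt_of_lt_of_le this (Finset.single_le_sum
      (f := fun i => d i j * a i)
      (fun i _ => mul_nonneg (hd i j) (Complex.normSq_nonneg _)) (Finset.mem_univ j))
  set S : ℝ := ∑ j, a j / s j with hS
  set w : Fin n → ℂ := fun j => u j / (s j : ℂ) with hw
  have h := key d hpos u w
  have h1 : star w ⬝ᵥ u = (S : ℂ) := by
    simp only [dotProduct, Pi.star_apply, hw, hS]
    push_cast
    congr 1; ext j
    rw [star_div₀, show star ((s j : ℝ) : ℂ) = ((s j : ℝ) : ℂ) from Complex.conj_ofReal _,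
      div_mul_eq_mul_div]
    congr 1
    rw [show (star (u j) * u j : ℂ) = ((Complex.normSq (u j) : ℝ) : ℂ) from by
      rw [Complex.normSq_eq_conj_mul_self]; rfl]
  have h2 : ∀ j, Complex.normSq (w j) = a j / (s j) ^ 2 := by
    intro j
    simp only [hw, Complex.normSq_div, Complex.normSq_ofReal, ha, sq]
  rw [h1] at h
  have h3 : Complex.normSq (S : ℂ) = S ^ 2 := by
    simp [Complex.normSq_ofReal, sq]
  rw [h3] at h
  have h4 : ∑ j, (∑ i, d i j * Complex.normSq (u i)) * Complex.normSq (w j) = S := by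
    rw [hS]; congr 1; ext j
    rw [h2 j]
    have : (∑ i, d i j * Complex.normSq (u i)) = s j := rfl
    rw [this, sq, ← mul_div_assoc, mul_div_mul_left _ _ (hspos j).ne']
  rw [h4] at h
  have hSnn : 0 ≤ S := Finset.sum_nonneg fun j _ =>
    div_nonneg (Complex.normSq_nonneg _) (hspos j).le
  nlinarith

lemma subset_sum_le_one {n : ℕ} (d : Fin n → Fin n → ℝ) (hd : ∀ i j, 0 ≤ d i j)
    (hdd : ∀ i, 0 < d i i)
    (H : ∀ u : Fin n → ℂ, (∀ i, u i ≠ 0) →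
      ∑ j, Complex.normSq (u j) / (∑ i, d i j * Complex.normSq (u i)) ≤ 1)
    (v : Fin n → ℂ) :
    ∑ j ∈ Finset.univ.filter (fun j => v j ≠ 0),
      Complex.normSq (v j) / (∑ i, d i j * Complex.normSq (v i)) ≤ 1 := by
  classical
  set S := Finset.univ.filter (fun j => v j ≠ 0) with hSdef
  have hspos : ∀ j ∈ S, 0 < ∑ i, d i j * Complex.normSq (v i) := by
    intro j hj
    have hvj : v j ≠ 0 := (Finset.mem_filter.mp hj).2
    have h0 : 0 < d j j * Complex.normSq (v j) :=
      mul_pos (hdd j) (Complex.normSq_pos.mpr hvj)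
    exact lt_of_lt_of_le h0 (Finset.single_le_sum
      (f := fun i => d i j * Complex.normSq (v i))
      (fun i _ => mul_nonneg (hd i j) (Complex.normSq_nonneg _)) (Finset.mem_univ j))
  have hterm : ∀ (i j : Fin n), Tendsto
      (fun ε : ℝ => d i j * Complex.normSq (if v i = 0 then (ε : ℂ) else v i))
      (nhdsWithin 0 (Set.Ioi 0)) (nhds (d i j * Complex.normSq (v i))) := by
    intro i j
    by_cases hvi : v i = 0
    · simp only [hvi, if_pos rfl]
      have hc : Continuous (fun ε : ℝ => d i j * Complex.normSq ((ε : ℂ))) :=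
        continuous_const.mul (Complex.continuous_normSq.comp Complex.continuous_ofReal)
      have := (hc.tendsto 0).mono_left (nhdsWithin_le_nhds (s := Set.Ioi 0))
      simpa using this
    · simp only [if_neg hvi]
      exact tendsto_const_nhds
  have hden : ∀ j, Tendsto
      (fun ε : ℝ => ∑ i, d i j * Complex.normSq (if v i = 0 then (ε : ℂ) else v i))
      (nhdsWithin 0 (Set.Ioi 0)) (nhds (∑ i, d i j * Complex.normSq (v i))) :=
    fun j => tendsto_finset_sum _ (fun i _ => hterm i j)
  have htend : Tendsto
      (fun ε : ℝ => ∑ j ∈ S, Complex.normSq (v j) /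
        (∑ i, d i j * Complex.normSq (if v i = 0 then (ε : ℂ) else v i)))
      (nhdsWithin 0 (Set.Ioi 0))
      (nhds (∑ j ∈ S, Complex.normSq (v j) / (∑ i, d i j * Complex.normSq (v i)))) :=
    tendsto_finset_sum _ (fun j hj =>
      Tendsto.div tendsto_const_nhds (hden j) (hspos j hj).ne')
  refine le_of_tendsto htend ?_
  filter_upwards [self_mem_nhdsWithin] with ε hε
  have hε' : (0:ℝ) < ε := hε
  set u : Fin n → ℂ := fun i => if v i = 0 then (ε : ℂ) else v i with hu
  have hune : ∀ i, u i ≠ 0 := by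
    intro i
    by_cases hvi : v i = 0
    · simp [hu, hvi, Complex.ofReal_ne_zero.mpr hε'.ne']
    · simp [hu, hvi]
  have h1 := H u hune
  refine le_trans ?_ h1
  have h2 : ∀ j ∈ S, Complex.normSq (v j) / (∑ i, d i j * Complex.normSq (u i))
      = Complex.normSq (u j) / (∑ i, d i j * Complex.normSq (u i)) := by
    intro j hj
    have hvj : v j ≠ 0 := (Finset.mem_filter.mp hj).2
    rw [show u j = v j from if_neg hvj]
  rw [Finset.sum_congr rfl h2]
  apply Finset.sum_le_sum_of_subset_of_nonneg (Finset.filter_subset _ _)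
  intro j _ _
  exact div_nonneg (Complex.normSq_nonneg _) (Finset.sum_nonneg fun i _ =>
    mul_nonneg (hd i j) (Complex.normSq_nonneg _))

lemma rank_one_ineq {n : ℕ} (d : Fin n → Fin n → ℝ) (hd : ∀ i j, 0 ≤ d i j)
    (hdd : ∀ i, 0 < d i i)
    (H : ∀ u : Fin n → ℂ, (∀ i, u i ≠ 0) →
      ∑ j, Complex.normSq (u j) / (∑ i, d i j * Complex.normSq (u i)) ≤ 1)
    (v u : Fin n → ℂ) :
    Complex.normSq (∑ j, v j * u j)
      ≤ ∑ j, (∑ i, d i j * Complex.normSq (v i)) * Complex.normSq (u j) := by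
  classical
  set S := Finset.univ.filter (fun j => v j ≠ 0) with hSdef
  set s : Fin n → ℝ := fun j => ∑ i, d i j * Complex.normSq (v i) with hs
  have hsnn : ∀ j, 0 ≤ s j := fun j => Finset.sum_nonneg fun i _ =>
    mul_nonneg (hd i j) (Complex.normSq_nonneg _)
  have hspos : ∀ j ∈ S, 0 < s j := by
    intro j hj
    have hvj : v j ≠ 0 := (Finset.mem_filter.mp hj).2
    exact lt_of_lt_of_le (mul_pos (hdd j) (Complex.normSq_pos.mpr hvj))
      (Finset.single_le_sum (f := fun i => d i j * Complex.normSq (v i))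
        (fun i _ => mul_nonneg (hd i j) (Complex.normSq_nonneg _)) (Finset.mem_univ j))
  -- step 1: |∑ v u| ≤ ∑_S |v||u|
  have step1 : ‖∑ j, v j * u j‖ ≤ ∑ j ∈ S, ‖v j‖ * ‖u j‖ := by
    calc ‖∑ j, v j * u j‖ ≤ ∑ j, ‖v j * u j‖ := by
          simpa using norm_sum_le Finset.univ (fun j => v j * u j)
      _ = ∑ j, ‖v j‖ * ‖u j‖ := by
          simp [norm_mul]
      _ = ∑ j ∈ S, ‖v j‖ * ‖u j‖ := by
          symm
          apply Finset.sum_subset (Finset.filter_subset _ _)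
          intro j _ hj
          have : v j = 0 := by
            by_contra hne
            exact hj (Finset.mem_filter.mpr ⟨Finset.mem_univ j, hne⟩)
          simp [this]
  -- step 2: Cauchy-Schwarz
  have step2 : (∑ j ∈ S, ‖v j‖ * ‖u j‖) ^ 2
      ≤ (∑ j ∈ S, Complex.normSq (v j) / s j) * (∑ j ∈ S, s j * Complex.normSq (u j)) := by
    have hcs := Finset.sum_mul_sq_le_sq_mul_sq S
      (fun j => ‖v j‖ / Real.sqrt (s j))
      (fun j => Real.sqrt (s j) * ‖u j‖)
    have e1 : ∀ j ∈ S, (‖v j‖ / Real.sqrt (s j)) * (Real.sqrt (s j) * ‖u j‖)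
        = ‖v j‖ * ‖u j‖ := by
      intro j hj
      have : Real.sqrt (s j) ≠ 0 := (Real.sqrt_pos.mpr (hspos j hj)).ne'
      field_simp
    have e2 : ∀ j ∈ S, (‖v j‖ / Real.sqrt (s j)) ^ 2 = Complex.normSq (v j) / s j := by
      intro j hj
      rw [div_pow, Complex.sq_norm, Real.sq_sqrt (hspos j hj).le]
    have e3 : ∀ j ∈ S, (Real.sqrt (s j) * ‖u j‖) ^ 2 = s j * Complex.normSq (u j) := by
      intro j hj
      rw [mul_pow, Complex.sq_norm, Real.sq_sqrt (hspos j hj).le]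
    rw [Finset.sum_congr rfl e1, Finset.sum_congr rfl e2, Finset.sum_congr rfl e3] at hcs
    exact hcs
  have step3 : (∑ j ∈ S, Complex.normSq (v j) / s j) ≤ 1 :=
    subset_sum_le_one d hd hdd H v
  have step4 : (∑ j ∈ S, s j * Complex.normSq (u j)) ≤ ∑ j, s j * Complex.normSq (u j) := by
    apply Finset.sum_le_sum_of_subset_of_nonneg (Finset.filter_subset _ _)
    intro j _ _
    exact mul_nonneg (hsnn j) (Complex.normSq_nonneg _)
  have habs : Complex.normSq (∑ j, v j * u j) = ‖∑ j, v j * u j‖ ^ 2 :=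
    (Complex.sq_norm _).symm
  rw [habs]
  have hSnn2 : 0 ≤ ∑ j ∈ S, s j * Complex.normSq (u j) :=
    Finset.sum_nonneg fun j _ => mul_nonneg (hsnn j) (Complex.normSq_nonneg _)
  calc ‖∑ j, v j * u j‖ ^ 2
      ≤ (∑ j ∈ S, ‖v j‖ * ‖u j‖) ^ 2 := by
        apply pow_le_pow_left₀ (norm_nonneg _) step1
    _ ≤ (∑ j ∈ S, Complex.normSq (v j) / s j) * (∑ j ∈ S, s j * Complex.normSq (u j)) := step2
    _ ≤ 1 * (∑ j, s j * Complex.normSq (u j)) := by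
        apply mul_le_mul step3 step4 hSnn2 one_pos.le
    _ = ∑ j, s j * Complex.normSq (u j) := one_mul _

lemma backward_psd {n : ℕ} (d : Fin n → Fin n → ℝ) (hd : ∀ i j, 0 ≤ d i j)
    (hdd : ∀ i, 0 < d i i)
    (H : ∀ u : Fin n → ℂ, (∀ i, u i ≠ 0) →
      ∑ j, Complex.normSq (u j) / (∑ i, d i j * Complex.normSq (u i)) ≤ 1)
    (A : Matrix (Fin n) (Fin n) ℂ) (hA : A.PosSemidef) :
    (Matrix.diagonal (fun j => ∑ i, (d i j : ℂ) * A i i) - A).PosSemidef := by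
  classical
  obtain ⟨B, rfl⟩ : ∃ B : Matrix (Fin n) (Fin n) ℂ, A = Bᴴ * B := by
    open scoped MatrixOrder Matrix.Norms.L2Operator in
    exact CStarAlgebra.nonneg_iff_eq_star_mul_self.mp hA.nonneg
  set A := Bᴴ * B with hAdef
  have hAii : ∀ i, A i i = ((∑ m, Complex.normSq (B m i) : ℝ) : ℂ) := by
    intro i
    have : A i i = ∑ m, star (B m i) * B m i := by
      simp [hAdef, Matrix.mul_apply, Matrix.conjTranspose_apply]
    rw [this]
    push_cast
    congr 1; funext m
    rw [Complex.normSq_eq_conj_mul_self]; rfl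
  set r : Fin n → ℝ := fun j => ∑ i, d i j * ∑ m, Complex.normSq (B m i) with hr
  have hc : (fun j => ∑ i, (d i j : ℂ) * A i i) = fun j => ((r j : ℝ) : ℂ) := by
    funext j
    rw [hr]
    push_cast
    exact Finset.sum_congr rfl fun i _ => by rw [hAii i]; push_cast; ring
  rw [hc]
  refine Matrix.PosSemidef.of_dotProduct_mulVec_nonneg ?_ ?_
  · -- Hermitian
    apply Matrix.IsHermitian.sub
    · apply Matrix.isHermitian_diagonal_of_self_adjoint
      exact funext fun j => Complex.conj_ofReal _
    · exact hA.1
  · intro u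
    have e2 : star u ⬝ᵥ (Matrix.diagonal (fun j => ((r j : ℝ) : ℂ))) *ᵥ u
        = ((∑ j, r j * Complex.normSq (u j) : ℝ) : ℂ) := by
      simp only [Matrix.mulVec_diagonal, dotProduct, Pi.star_apply]
      push_cast
      congr 1; funext j
      rw [show star (u j) * (((r j : ℝ) : ℂ) * u j)
          = ((r j : ℝ) : ℂ) * (u j * star (u j)) by ring, ← Complex.mul_conj]
      rfl
    have e3 : star u ⬝ᵥ A *ᵥ u = ((∑ m, Complex.normSq ((B *ᵥ u) m) : ℝ) : ℂ) := by
      rw [hAdef, ← Matrix.mulVec_mulVec, Matrix.dotProduct_mulVec,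
        ← Matrix.star_mulVec]
      simp only [dotProduct, Pi.star_apply]
      push_cast
      congr 1; funext m
      rw [Complex.normSq_eq_conj_mul_self]; rfl
    rw [Matrix.sub_mulVec, dotProduct_sub, e2, e3, ← Complex.ofReal_sub]
    rw [show ((0:ℂ) = ((0:ℝ):ℂ)) from rfl, Complex.real_le_real]
    rw [sub_nonneg]
    -- the real inequality
    have key : ∀ m, Complex.normSq ((B *ᵥ u) m)
        ≤ ∑ j, (∑ i, d i j * Complex.normSq (B m i)) * Complex.normSq (u j) := by
      intro m
      have := rank_one_ineq d hd hdd H (fun j => B m j) u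
      simpa [Matrix.mulVec, dotProduct] using this
    calc ∑ m, Complex.normSq ((B *ᵥ u) m)
        ≤ ∑ m, ∑ j, (∑ i, d i j * Complex.normSq (B m i)) * Complex.normSq (u j) :=
          Finset.sum_le_sum fun m _ => key m
      _ = ∑ j, r j * Complex.normSq (u j) := by
          rw [Finset.sum_comm]
          refine Finset.sum_congr rfl fun j _ => ?_
          rw [hr, ← Finset.sum_mul]
          congr 1
          rw [Finset.sum_comm]
          refine Finset.sum_congr rfl fun i _ => ?_
          rw [Finset.mul_sum]

open Matrix ComplexOrder in
/-- the `D`-type map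
`A ↦ diag(∑_k a_{kk} d_{k1}, …, ∑_k a_{kk} d_{kn}) − A` is positive iff
`d_{ii} > 0` for all `i` and `∑_j |u_j|²/(∑_i d_{ij}|u_i|²) ≤ 1` for every
vector `u` with all entries nonzero. -/
theorem stmt_12 {n : ℕ} (d : Fin n → Fin n → ℝ) (hd : ∀ i j, 0 ≤ d i j)
    (L : Matrix (Fin n) (Fin n) ℂ → Matrix (Fin n) (Fin n) ℂ)
    (hL : ∀ A, L A =
      Matrix.diagonal (fun j => ∑ i, (d i j : ℂ) * A i i) - A) :
    (∀ A : Matrix (Fin n) (Fin n) ℂ, A.PosSemidef → (L A).PosSemidef)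
    ↔ ((∀ i, 0 < d i i) ∧
        ∀ u : Fin n → ℂ, (∀ i, u i ≠ 0) →
          ∑ j, Complex.normSq (u j) / (∑ i, d i j * Complex.normSq (u i)) ≤ 1) := by
  constructor
  · intro h
    have hpos : ∀ A : Matrix (Fin n) (Fin n) ℂ, A.PosSemidef →
        (Matrix.diagonal (fun j => ∑ i, (d i j : ℂ) * A i i) - A).PosSemidef :=
      fun A hA => hL A ▸ h A hA
    exact ⟨fun i => lt_of_lt_of_le one_pos (key_dii d hpos i),
      fun u hu => key_sum d hd hpos u hu⟩
  · rintro ⟨hdd, H⟩ A hA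
    rw [hL]
    exact backward_psd d hd hdd H A hA
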